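/- In a finite-horizon MDP, if two transition kernels P and P' satisfy E_{(s_t,a_t)~P^π}[D_TV(P'(·|s_t,a_t), P(·|s_t,a_t))] ≤ ε for every time step t, where P^π denotes the state-action occupancy at time t induced by rolling out policy π in the MDP with transitions P, then for every t, E_{(s_t,a_t)~P^π}[|Q^π_{P'}(s_t,a_t) − Q^π_P(s_t,a_t)|] ≤ ε·(H−t)·V_max, where V_max = H·R_max bounds cumulative rewards. -/
import Mathlib


open Finset

/-- Q-value of policy `π` in the MDP with transitions `P` and reward `R`,
with `k` steps remaining (value functions at the final step are 0). -/
noncomputable def Qval {S A : Type*} [Fintype S] [Fintype A]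
    (P : S → A → S → ℝ) (R : S → ℝ) (π : S → A → ℝ) : ℕ → S → A → ℝ
  | 0, _, _ => 0
  | (k+1), s, a => ∑ s', P s a s' * (R s' + ∑ a', π s' a' * Qval P R π k s' a')

/-- Occupancy over state-action pairs at time `t` when rolling out policy `π`
from `ρ0` under transitions `P`. -/
noncomputable def occ {S A : Type*} [Fintype S] [Fintype A]
    (P : S → A → S → ℝ) (π : S → A → ℝ) (ρ0 : S → ℝ) : ℕ → S → A → ℝ
  | 0, s, a => ρ0 s * π s a
  | (t+1), s', a' => (∑ s, ∑ a, occ P π ρ0 t s a * P s a s') * π s' a'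

section helpers

variable {S A : Type*} [Fintype S] [Fintype A]

lemma pair_bound (p q f : S → ℝ) (M : ℝ)
    (hp1 : ∑ s, p s = 1) (hq1 : ∑ s, q s = 1)
    (hf0 : ∀ s, 0 ≤ f s) (hfM : ∀ s, f s ≤ M) :
    |∑ s, (q s - p s) * f s| ≤ M * ((1/2) * ∑ s, |q s - p s|) := by
  have h0 : ∑ s, (q s - p s) = 0 := by
    rw [Finset.sum_sub_distrib, hp1, hq1]; ring
  have heq : ∑ s, (q s - p s) * f s = ∑ s, (q s - p s) * (f s - M/2) := by
    simp only [mul_sub, Finset.sum_sub_distrib, ← Finset.sum_mul, h0]; ring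
  rw [heq]
  calc |∑ s, (q s - p s) * (f s - M/2)| ≤ ∑ s, |(q s - p s) * (f s - M/2)| :=
        Finset.abs_sum_le_sum_abs _ _
    _ ≤ ∑ s, |q s - p s| * (M/2) := by
        apply Finset.sum_le_sum; intro s _
        rw [abs_mul]
        refine mul_le_mul_of_nonneg_left ?_ (abs_nonneg _)
        rw [abs_le]
        constructor
        · linarith [hf0 s]
        · linarith [hfM s]
    _ = M * ((1/2) * ∑ s, |q s - p s|) := by rw [← Finset.sum_mul]; ring

lemma Qval_bounds (P : S → A → S → ℝ) (R : S → ℝ) (π : S → A → ℝ) (Rmax : ℝ)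
    (hP0 : ∀ s a s', 0 ≤ P s a s') (hP1 : ∀ s a, ∑ s', P s a s' = 1)
    (hπ0 : ∀ s a, 0 ≤ π s a) (hπ1 : ∀ s, ∑ a, π s a = 1)
    (hR0 : ∀ s, 0 ≤ R s) (hR1 : ∀ s, R s ≤ Rmax) :
    ∀ (k : ℕ) (s : S) (a : A), 0 ≤ Qval P R π k s a ∧ Qval P R π k s a ≤ k * Rmax := by
  intro k
  induction k with
  | zero => intro s a; simp [Qval]
  | succ k ih =>
    intro s a
    have hV : ∀ s' : S, 0 ≤ ∑ a', π s' a' * Qval P R π k s' a' ∧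
        ∑ a', π s' a' * Qval P R π k s' a' ≤ k * Rmax := by
      intro s'
      constructor
      · exact Finset.sum_nonneg fun a' _ => mul_nonneg (hπ0 _ _) (ih s' a').1
      · calc ∑ a', π s' a' * Qval P R π k s' a' ≤ ∑ a', π s' a' * (k * Rmax) :=
            Finset.sum_le_sum fun a' _ => mul_le_mul_of_nonneg_left (ih s' a').2 (hπ0 _ _)
          _ = k * Rmax := by rw [← Finset.sum_mul, hπ1]; ring
    constructor
    · exact Finset.sum_nonneg fun s' _ =>
        mul_nonneg (hP0 _ _ _) (add_nonneg (hR0 _) (hV s').1)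
    · calc Qval P R π (k+1) s a
          = ∑ s', P s a s' * (R s' + ∑ a', π s' a' * Qval P R π k s' a') := rfl
        _ ≤ ∑ s', P s a s' * ((k+1 : ℕ) * Rmax) := by
            refine Finset.sum_le_sum fun s' _ => ?_
            refine mul_le_mul_of_nonneg_left ?_ (hP0 _ _ _)
            push_cast
            linarith [(hV s').2, hR1 s']
        _ = (k+1 : ℕ) * Rmax := by rw [← Finset.sum_mul, hP1]; ring

lemma occ_nonneg (P : S → A → S → ℝ) (π : S → A → ℝ) (ρ0 : S → ℝ)
    (hρ0 : ∀ s, 0 ≤ ρ0 s) (hP0 : ∀ s a s', 0 ≤ P s a s')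
    (hπ0 : ∀ s a, 0 ≤ π s a) :
    ∀ (t : ℕ) (s : S) (a : A), 0 ≤ occ P π ρ0 t s a := by
  intro t
  induction t with
  | zero => intro s a; exact mul_nonneg (hρ0 s) (hπ0 s a)
  | succ t ih =>
    intro s' a'
    refine mul_nonneg (Finset.sum_nonneg fun s _ => Finset.sum_nonneg fun a _ =>
      mul_nonneg (ih s a) (hP0 s a s')) (hπ0 s' a')

lemma sum_swap4 (F : S → A → S → A → ℝ) :
    ∑ s, ∑ a, ∑ s', ∑ a', F s a s' a' = ∑ s', ∑ a', ∑ s, ∑ a, F s a s' a' :=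
  calc ∑ s, ∑ a, ∑ s', ∑ a', F s a s' a'
      = ∑ s, ∑ s', ∑ a, ∑ a', F s a s' a' :=
        Finset.sum_congr rfl fun s _ => Finset.sum_comm
    _ = ∑ s', ∑ s, ∑ a, ∑ a', F s a s' a' := Finset.sum_comm
    _ = ∑ s', ∑ s, ∑ a', ∑ a, F s a s' a' :=
        Finset.sum_congr rfl fun s' _ => Finset.sum_congr rfl fun s _ =>
          Finset.sum_comm
    _ = ∑ s', ∑ a', ∑ s, ∑ a, F s a s' a' :=
        Finset.sum_congr rfl fun s' _ => Finset.sum_comm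

lemma occ_step (P : S → A → S → ℝ) (π : S → A → ℝ) (ρ0 : S → ℝ) (t : ℕ) (D : S → A → ℝ) :
    ∑ s, ∑ a, occ P π ρ0 t s a * ∑ s', P s a s' * ∑ a', π s' a' * D s' a'
      = ∑ s', ∑ a', occ P π ρ0 (t+1) s' a' * D s' a' := by
  have key : ∀ s' a', occ P π ρ0 (t+1) s' a' * D s' a' =
      (∑ s, ∑ a, occ P π ρ0 t s a * P s a s') * (π s' a' * D s' a') := by
    intro s' a'
    show ((∑ s, ∑ a, occ P π ρ0 t s a * P s a s') * π s' a') * D s' a' = _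
    ring
  simp only [key]
  calc ∑ s, ∑ a, occ P π ρ0 t s a * ∑ s', P s a s' * ∑ a', π s' a' * D s' a'
      = ∑ s, ∑ a, ∑ s', ∑ a', occ P π ρ0 t s a * (P s a s' * (π s' a' * D s' a')) := by
        simp only [Finset.mul_sum]
    _ = ∑ s', ∑ a', ∑ s, ∑ a, occ P π ρ0 t s a * (P s a s' * (π s' a' * D s' a')) :=
        sum_swap4 _
    _ = ∑ s', ∑ a', (∑ s, ∑ a, occ P π ρ0 t s a * P s a s') * (π s' a' * D s' a') := by
        refine Finset.sum_congr rfl fun s' _ => Finset.sum_congr rfl fun a' _ => ?_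
        rw [Finset.sum_mul]
        refine Finset.sum_congr rfl fun s _ => ?_
        rw [Finset.sum_mul]
        exact Finset.sum_congr rfl fun a _ => by ring

end helpers

section main

variable {S A : Type*} [Fintype S] [Fintype A]

lemma Q_diff_rec (P P' : S → A → S → ℝ) (R : S → ℝ) (π : S → A → ℝ) (Rmax : ℝ)
    (hP0 : ∀ s a s', 0 ≤ P s a s') (hP1 : ∀ s a, ∑ s', P s a s' = 1)
    (hP'0 : ∀ s a s', 0 ≤ P' s a s') (hP'1 : ∀ s a, ∑ s', P' s a s' = 1)
    (hπ0 : ∀ s a, 0 ≤ π s a) (hπ1 : ∀ s, ∑ a, π s a = 1)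
    (hR0 : ∀ s, 0 ≤ R s) (hR1 : ∀ s, R s ≤ Rmax) (k : ℕ) (s : S) (a : A) :
    |Qval P' R π (k+1) s a - Qval P R π (k+1) s a| ≤
      ((k+1 : ℕ) : ℝ) * Rmax * ((1/2) * ∑ s', |P' s a s' - P s a s'|) +
      ∑ s', P s a s' * ∑ a', π s' a' * |Qval P' R π k s' a' - Qval P R π k s' a'| := by
  set f' : S → ℝ := fun s' => R s' + ∑ a', π s' a' * Qval P' R π k s' a' with hf'
  set f : S → ℝ := fun s' => R s' + ∑ a', π s' a' * Qval P R π k s' a' with hf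
  have hQ' := Qval_bounds P' R π Rmax hP'0 hP'1 hπ0 hπ1 hR0 hR1
  have hdecomp : Qval P' R π (k+1) s a - Qval P R π (k+1) s a
      = (∑ s', (P' s a s' - P s a s') * f' s') + ∑ s', P s a s' * (f' s' - f s') := by
    show (∑ s', P' s a s' * f' s') - ∑ s', P s a s' * f s' = _
    simp only [sub_mul, mul_sub, Finset.sum_sub_distrib]
    ring
  have hf'0 : ∀ s', 0 ≤ f' s' := fun s' =>
    add_nonneg (hR0 _) (Finset.sum_nonneg fun a' _ => mul_nonneg (hπ0 _ _) (hQ' k s' a').1)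
  have hf'M : ∀ s', f' s' ≤ ((k+1 : ℕ) : ℝ) * Rmax := by
    intro s'
    have hV : ∑ a', π s' a' * Qval P' R π k s' a' ≤ (k : ℝ) * Rmax := by
      calc ∑ a', π s' a' * Qval P' R π k s' a' ≤ ∑ a', π s' a' * ((k : ℝ) * Rmax) :=
          Finset.sum_le_sum fun a' _ => mul_le_mul_of_nonneg_left (hQ' k s' a').2 (hπ0 _ _)
        _ = (k : ℝ) * Rmax := by rw [← Finset.sum_mul, hπ1]; ring
    have := hR1 s'
    show R s' + _ ≤ _
    push_cast
    linarith
  have hA : |∑ s', (P' s a s' - P s a s') * f' s'| ≤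
      ((k+1 : ℕ) : ℝ) * Rmax * ((1/2) * ∑ s', |P' s a s' - P s a s'|) :=
    pair_bound (fun s' => P s a s') (fun s' => P' s a s') f' _ (hP1 s a) (hP'1 s a) hf'0 hf'M
  have hB : |∑ s', P s a s' * (f' s' - f s')| ≤
      ∑ s', P s a s' * ∑ a', π s' a' * |Qval P' R π k s' a' - Qval P R π k s' a'| := by
    calc |∑ s', P s a s' * (f' s' - f s')| ≤ ∑ s', |P s a s' * (f' s' - f s')| :=
        Finset.abs_sum_le_sum_abs _ _
      _ ≤ ∑ s', P s a s' * ∑ a', π s' a' * |Qval P' R π k s' a' - Qval P R π k s' a'| := by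
        refine Finset.sum_le_sum fun s' _ => ?_
        rw [abs_mul, abs_of_nonneg (hP0 s a s')]
        refine mul_le_mul_of_nonneg_left ?_ (hP0 s a s')
        have : f' s' - f s' = ∑ a', π s' a' * (Qval P' R π k s' a' - Qval P R π k s' a') := by
          simp only [hf', hf, mul_sub, Finset.sum_sub_distrib]
          ring
        rw [this]
        calc |∑ a', π s' a' * (Qval P' R π k s' a' - Qval P R π k s' a')|
            ≤ ∑ a', |π s' a' * (Qval P' R π k s' a' - Qval P R π k s' a')| :=
              Finset.abs_sum_le_sum_abs _ _
          _ = ∑ a', π s' a' * |Qval P' R π k s' a' - Qval P R π k s' a'| := by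
              refine Finset.sum_congr rfl fun a' _ => ?_
              rw [abs_mul, abs_of_nonneg (hπ0 s' a')]
  calc |Qval P' R π (k+1) s a - Qval P R π (k+1) s a|
      = |(∑ s', (P' s a s' - P s a s') * f' s') + ∑ s', P s a s' * (f' s' - f s')| := by
        rw [hdecomp]
    _ ≤ |∑ s', (P' s a s' - P s a s') * f' s'| + |∑ s', P s a s' * (f' s' - f s')| :=
        abs_add_le _ _
    _ ≤ _ := add_le_add hA hB

lemma key_lemma (H : ℕ) (Rmax ε : ℝ)
    (P P' : S → A → S → ℝ) (R : S → ℝ) (π : S → A → ℝ) (ρ0 : S → ℝ)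
    (hρ0 : ∀ s, 0 ≤ ρ0 s)
    (hP0 : ∀ s a s', 0 ≤ P s a s') (hP1 : ∀ s a, ∑ s', P s a s' = 1)
    (hP'0 : ∀ s a s', 0 ≤ P' s a s') (hP'1 : ∀ s a, ∑ s', P' s a s' = 1)
    (hπ0 : ∀ s a, 0 ≤ π s a) (hπ1 : ∀ s, ∑ a, π s a = 1)
    (hR0 : ∀ s, 0 ≤ R s) (hR1 : ∀ s, R s ≤ Rmax)
    (hRmax : 0 ≤ Rmax) (hεnn : 0 ≤ ε)
    (hε : ∀ t : ℕ,
      ∑ s, ∑ a, occ P π ρ0 t s a * ((1/2) * ∑ s', |P' s a s' - P s a s'|) ≤ ε) :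
    ∀ k : ℕ, k ≤ H → ∀ t : ℕ,
      ∑ s, ∑ a, occ P π ρ0 t s a * |Qval P' R π k s a - Qval P R π k s a|
        ≤ ε * (k : ℝ) * ((H : ℝ) * Rmax) := by
  intro k
  induction k with
  | zero => intro _ t; simp [Qval]
  | succ k ih =>
    intro hk t
    have hocc := occ_nonneg P π ρ0 hρ0 hP0 hπ0
    have hM : (0 : ℝ) ≤ ((k+1 : ℕ) : ℝ) * Rmax := by positivity
    calc ∑ s, ∑ a, occ P π ρ0 t s a * |Qval P' R π (k+1) s a - Qval P R π (k+1) s a|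
        ≤ ∑ s, ∑ a, occ P π ρ0 t s a *
            (((k+1 : ℕ) : ℝ) * Rmax * ((1/2) * ∑ s', |P' s a s' - P s a s'|) +
             ∑ s', P s a s' * ∑ a', π s' a' *
               |Qval P' R π k s' a' - Qval P R π k s' a'|) := by
          refine Finset.sum_le_sum fun s _ => Finset.sum_le_sum fun a _ => ?_
          exact mul_le_mul_of_nonneg_left
            (Q_diff_rec P P' R π Rmax hP0 hP1 hP'0 hP'1 hπ0 hπ1 hR0 hR1 k s a)
            (hocc t s a)
      _ = ((k+1 : ℕ) : ℝ) * Rmax *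
            (∑ s, ∑ a, occ P π ρ0 t s a * ((1/2) * ∑ s', |P' s a s' - P s a s'|)) +
          ∑ s, ∑ a, occ P π ρ0 t s a *
            ∑ s', P s a s' * ∑ a', π s' a' *
              |Qval P' R π k s' a' - Qval P R π k s' a'| := by
          simp only [mul_add, Finset.sum_add_distrib, Finset.mul_sum]
          congr 1
          refine Finset.sum_congr rfl fun s _ => Finset.sum_congr rfl fun a _ =>
            Finset.sum_congr rfl fun s' _ => by ring
      _ = ((k+1 : ℕ) : ℝ) * Rmax *
            (∑ s, ∑ a, occ P π ρ0 t s a * ((1/2) * ∑ s', |P' s a s' - P s a s'|)) +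
          ∑ s', ∑ a', occ P π ρ0 (t+1) s' a' *
            |Qval P' R π k s' a' - Qval P R π k s' a'| := by
          rw [occ_step]
      _ ≤ ((k+1 : ℕ) : ℝ) * Rmax * ε + ε * (k : ℝ) * ((H : ℝ) * Rmax) :=
          add_le_add (mul_le_mul_of_nonneg_left (hε t) hM) (ih (by omega) (t+1))
      _ ≤ ε * ((k+1 : ℕ) : ℝ) * ((H : ℝ) * Rmax) := by
          have h1 : ((k+1 : ℕ) : ℝ) ≤ (H : ℝ) := by exact_mod_cast hk
          have h2 : 0 ≤ ε * Rmax := mul_nonneg hεnn hRmax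
          push_cast at h1 ⊢
          nlinarith

end main

/-- Model-based simulation lemma: if `P'` is `ε`-close to `P` in expected TV
under the occupancy of `π` at every step, then the Q-values of `π` under `P'`
and `P` differ by at most `ε(H−t)·V_max` on average, with `V_max = H·R_max`. -/
theorem stmt6 {S A : Type*} [Fintype S] [Fintype A] (H : ℕ) (Rmax ε : ℝ)
    (P P' : S → A → S → ℝ) (R : S → ℝ) (π : S → A → ℝ) (ρ0 : S → ℝ)
    (hρ0 : ∀ s, 0 ≤ ρ0 s) (hρ1 : ∑ s, ρ0 s = 1)
    (hP0 : ∀ s a s', 0 ≤ P s a s') (hP1 : ∀ s a, ∑ s', P s a s' = 1)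
    (hP'0 : ∀ s a s', 0 ≤ P' s a s') (hP'1 : ∀ s a, ∑ s', P' s a s' = 1)
    (hπ0 : ∀ s a, 0 ≤ π s a) (hπ1 : ∀ s, ∑ a, π s a = 1)
    (hR0 : ∀ s, 0 ≤ R s) (hR1 : ∀ s, R s ≤ Rmax)
    (hε : ∀ t : ℕ,
      ∑ s, ∑ a, occ P π ρ0 t s a * ((1/2) * ∑ s', |P' s a s' - P s a s'|) ≤ ε) :
    ∀ t : ℕ, t ≤ H →
      ∑ s, ∑ a, occ P π ρ0 t s a *
          |Qval P' R π (H - t) s a - Qval P R π (H - t) s a|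
        ≤ ε * ((H - t : ℕ) : ℝ) * ((H : ℝ) * Rmax) := by
  have hS : (Finset.univ : Finset S).Nonempty := by
    by_contra h
    rw [Finset.not_nonempty_iff_eq_empty] at h
    rw [h, Finset.sum_empty] at hρ1
    norm_num at hρ1
  obtain ⟨s0, -⟩ := hS
  have hRmax : 0 ≤ Rmax := le_trans (hR0 s0) (hR1 s0)
  have hεnn : 0 ≤ ε := by
    refine le_trans ?_ (hε 0)
    refine Finset.sum_nonneg fun s _ => Finset.sum_nonneg fun a _ => ?_
    have := occ_nonneg P π ρ0 hρ0 hP0 hπ0 0 s a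
    positivity
  intro t ht
  exact key_lemma H Rmax ε P P' R π ρ0 hρ0 hP0 hP1 hP'0 hP'1 hπ0 hπ1 hR0 hR1
    hRmax hεnn hε (H - t) (Nat.sub_le H t) t
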